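/- If a class of relational structures 𝒮 over a fixed dictionary σ has bounded expansion (meaning the class of Gaifman graphs {G_S : S ∈ 𝒮} has bounded expansion), then the class of (underlying undirected graphs of) incidence graphs {G^i_S : S ∈ 𝒮} has bounded expansion. -/

import Mathlib

/-- A dictionary: a finite set of relation symbols, each with a finite arity. -/
structure Dict where
  Rel : Type
  relFin : Fintype Rel
  arity : Rel → ℕ

/-- A relational structure for a dictionary `σ`: a finite universe together with a
realization of each relation symbol. -/
structure Struc (σ : Dict) where
  U : Type
  uFin : Fintype U
  real : ∀ R : σ.Rel, Set (Fin (σ.arity R) → U)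

/-- The Gaifman graph of a relational structure `S`: distinct vertices `a`, `b` are
adjacent iff some tuple of some relation of `S` contains both. -/
def gaifman {σ : Dict} (S : Struc σ) : SimpleGraph S.U where
  Adj a b := a ≠ b ∧ ∃ (R : σ.Rel) (x : Fin (σ.arity R) → S.U),
    x ∈ S.real R ∧ (∃ i, x i = a) ∧ (∃ j, x j = b)
  symm := by
    constructor
    rintro a b ⟨hab, R, x, hx, ha, hb⟩
    exact ⟨fun h => hab h.symm, R, x, hx, hb, ha⟩
  loopless := by constructor; rintro a ⟨h, -⟩; exact h rfl

/-- The tuples of a relational structure: pairs of a relation symbol `R` and a tuple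
satisfying `R`. -/
def Tup {σ : Dict} (S : Struc σ) : Type :=
  Σ R : σ.Rel, {x : Fin (σ.arity R) → S.U // x ∈ S.real R}

/-- The (underlying undirected graph of the) incidence graph of a relational structure
`S`: its vertices are the elements of the universe together with two vertices
`v_{R,x̄}` and `v'_{R,x̄}` for each tuple `x̄ ∈ R^S`; its edges are `v_{R,x̄} v'_{R,x̄}`
and `x_i v_{R,x̄}` for each `i`. -/
def incidence {σ : Dict} (S : Struc σ) : SimpleGraph (S.U ⊕ (Tup S ⊕ Tup S)) where
  Adj a b :=
    (∃ t : Tup S, (a = Sum.inr (Sum.inl t) ∧ b = Sum.inr (Sum.inr t)) ∨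
      (b = Sum.inr (Sum.inl t) ∧ a = Sum.inr (Sum.inr t))) ∨
    (∃ (t : Tup S) (i : Fin (σ.arity t.1)),
      (a = Sum.inl (t.2.1 i) ∧ b = Sum.inr (Sum.inl t)) ∨
      (b = Sum.inl (t.2.1 i) ∧ a = Sum.inr (Sum.inl t)))
  symm := by
    constructor
    rintro a b (⟨t, h | h⟩ | ⟨t, i, h | h⟩)
    · exact Or.inl ⟨t, Or.inr h⟩
    · exact Or.inl ⟨t, Or.inl h⟩
    · exact Or.inr ⟨t, i, Or.inr h⟩
    · exact Or.inr ⟨t, i, Or.inl h⟩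
  loopless := by
    constructor
    rintro a (⟨t, ⟨h1, h2⟩ | ⟨h1, h2⟩⟩ | ⟨t, i, ⟨h1, h2⟩ | ⟨h1, h2⟩⟩) <;> simp_all

/-- `boundedReach A n x y`: `y` can be reached from `x` by at most `n` steps of the
relation `A`. -/
def boundedReach {V : Type} (A : V → V → Prop) : ℕ → V → V → Prop
  | 0, x, y => x = y
  | n + 1, x, y => x = y ∨ ∃ z, A x z ∧ boundedReach A n z y

/-- `H` is a minor of depth `r` of `G`: `H` is obtained from a subgraph of `G` by
contracting vertex-disjoint connected subgraphs of radius at most `r` (the branch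
sets `B w`) into single vertices, suppressing loops and parallel edges. -/
def IsShallowMinor {V W : Type} (G : SimpleGraph V) (r : ℕ) (H : SimpleGraph W) : Prop :=
  ∃ B : W → Set V,
    (∀ w1 w2, w1 ≠ w2 → Disjoint (B w1) (B w2)) ∧
    (∀ w, ∃ c ∈ B w, ∀ x ∈ B w,
      boundedReach (fun a b => a ∈ B w ∧ b ∈ B w ∧ G.Adj a b) r c x) ∧
    (∀ w1 w2, H.Adj w1 w2 → ∃ x ∈ B w1, ∃ y ∈ B w2, G.Adj x y)

/-- A family of graphs has bounded expansion: there is `f : ℕ → ℝ` such that every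
minor of depth `r` of a member has average degree at most `2 f(r)`, i.e.
`∇_r ≤ f(r)` for all members. -/
def BoundedExpansionFam {ι : Type} {Vt : ι → Type} (G : ∀ i, SimpleGraph (Vt i)) : Prop :=
  ∃ f : ℕ → ℝ, ∀ (i : ι) (r : ℕ) (W : Type) (H : SimpleGraph W),
    IsShallowMinor (G i) r H → (Nat.card H.edgeSet : ℝ) ≤ f r * (Nat.card W : ℝ)

section BRLemmas
variable {V : Type} {A : V → V → Prop}

lemma br_mono : ∀ {n : ℕ} {x y : V}, boundedReach A n x y → boundedReach A (n+1) x y := by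
  intro n
  induction n with
  | zero =>
    intro x y h
    exact Or.inl h
  | succ n ih =>
    rintro x y (h | ⟨z, hz, hr⟩)
    · exact Or.inl h
    · exact Or.inr ⟨z, hz, ih hr⟩

lemma br_trans : ∀ {m n : ℕ} {x y z : V}, boundedReach A m x y →
    boundedReach A n y z → boundedReach A (m+n) x z := by
  intro m
  induction m with
  | zero =>
    intro n x y z h1 h2
    have h1' : x = y := h1
    subst h1'
    rw [show (0:ℕ)+n = n by omega]
    exact h2
  | succ m ih =>
    intro n x y z h1 h2
    rcases h1 with h | ⟨w, hw, hr⟩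
    · subst h
      rw [show m+1+n = n+(m+1) by omega]
      clear ih
      induction m with
      | zero => exact br_mono h2
      | succ m ih2 => exact br_mono ih2
    · rw [show m+1+n = (m+n)+1 by omega]
      exact Or.inr ⟨w, hw, ih hr h2⟩

lemma br_symm (hA : ∀ a b, A a b → A b a) :
    ∀ {n : ℕ} {x y : V}, boundedReach A n x y → boundedReach A n y x := by
  intro n
  induction n with
  | zero =>
    intro x y h
    exact (show x = y from h).symm
  | succ n ih =>
    rintro x y (h | ⟨z, hz, hr⟩)
    · exact Or.inl h.symm
    · exact br_trans (ih hr) (Or.inr ⟨x, hA _ _ hz, rfl⟩)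

end BRLemmas

section IncAux
variable {σ : Dict} {S : Struc σ}

/-- Project a walk in the incidence graph (inside a branch set `Bw`) to a walk in the
Gaifman graph among the universe vertices of `Bw`. -/
lemma proj_walk (Bw : Set (S.U ⊕ (Tup S ⊕ Tup S))) (b : S.U) :
    ∀ (n : ℕ) (x : S.U ⊕ (Tup S ⊕ Tup S)) (a : S.U),
      Sum.inl a ∈ Bw →
      (x = Sum.inl a ∨ ∃ t : Tup S,
        (x = Sum.inr (Sum.inl t) ∨ x = Sum.inr (Sum.inr t)) ∧ ∃ j, t.2.1 j = a) →
      boundedReach (fun p q => p ∈ Bw ∧ q ∈ Bw ∧ (incidence S).Adj p q) n x (Sum.inl b) →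
      boundedReach (fun u v => Sum.inl u ∈ Bw ∧ Sum.inl v ∈ Bw ∧ (gaifman S).Adj u v) n a b := by
  intro n
  induction n with
  | zero =>
    intro x a haB hinv h
    have hx : x = Sum.inl b := h
    subst hx
    rcases hinv with heq | ⟨t, (heq | heq), _⟩
    · exact Sum.inl.inj heq.symm
    · simp at heq
    · simp at heq
  | succ n ih =>
    intro x a haB hinv h
    rcases h with rfl | ⟨z, ⟨hxB, hzB, hadj⟩, hr⟩
    · rcases hinv with heq | ⟨t, (heq | heq), _⟩
      · exact Or.inl (Sum.inl.inj heq.symm)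
      · simp at heq
      · simp at heq
    · have hadj' : (∃ t : Tup S, (x = Sum.inr (Sum.inl t) ∧ z = Sum.inr (Sum.inr t)) ∨
          (z = Sum.inr (Sum.inl t) ∧ x = Sum.inr (Sum.inr t))) ∨
          (∃ (t : Tup S) (i : Fin (σ.arity t.1)),
            (x = Sum.inl (t.2.1 i) ∧ z = Sum.inr (Sum.inl t)) ∨
            (z = Sum.inl (t.2.1 i) ∧ x = Sum.inr (Sum.inl t))) := hadj
      rcases hadj' with ⟨t, ⟨rfl, rfl⟩ | ⟨rfl, rfl⟩⟩ | ⟨t, i, ⟨rfl, rfl⟩ | ⟨rfl, rfl⟩⟩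
      · -- x = VL t, z = VP t
        rcases hinv with heq | ⟨t', (heq | heq), j, hj⟩
        · simp at heq
        · have ht : t = t' := by
            have := Sum.inr.inj heq
            exact (Sum.inl.inj this)
          subst ht
          exact br_mono (ih _ a haB (Or.inr ⟨t, Or.inr rfl, j, hj⟩) hr)
        · simp at heq
      · -- x = VP t, z = VL t
        rcases hinv with heq | ⟨t', (heq | heq), j, hj⟩
        · simp at heq
        · simp at heq
        · have ht : t = t' := Sum.inr.inj (Sum.inr.inj heq)
          subst ht
          exact br_mono (ih _ a haB (Or.inr ⟨t, Or.inl rfl, j, hj⟩) hr)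
      · -- x = inl (elem i), z = VL t
        rcases hinv with heq | ⟨t', (heq | heq), j, hj⟩
        · have ha : t.2.1 i = a := Sum.inl.inj heq
          exact br_mono (ih _ a haB (Or.inr ⟨t, Or.inl rfl, i, ha⟩) hr)
        · simp at heq
        · simp at heq
      · -- z = inl (elem i), x = VL t
        rcases hinv with heq | ⟨t', (heq | heq), j, hj⟩
        · simp at heq
        · have ht : t = t' := Sum.inl.inj (Sum.inr.inj heq)
          subst ht
          by_cases hau : a = t.2.1 i
          · exact br_mono (ih _ a haB (Or.inl (by rw [hau])) hr)
          · refine Or.inr ⟨t.2.1 i, ⟨haB, hzB, ?_⟩, ih _ _ hzB (Or.inl rfl) hr⟩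
            exact ⟨hau, t.1, t.2.1, t.2.2, ⟨j, hj⟩, ⟨i, rfl⟩⟩
        · simp at heq
end IncAux

section IncAux2
variable {σ : Dict} {S : Struc σ}

/-- If a branch set contains a tuple vertex and a universe vertex, it contains a
universe vertex which is an element of that tuple. -/
lemma find_elem (Bw : Set (S.U ⊕ (Tup S ⊕ Tup S))) (b : S.U) :
    ∀ (n : ℕ) (t : Tup S),
      (boundedReach (fun p q => p ∈ Bw ∧ q ∈ Bw ∧ (incidence S).Adj p q) n
          (Sum.inr (Sum.inl t)) (Sum.inl b) → ∃ j, Sum.inl (t.2.1 j) ∈ Bw) ∧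
      (boundedReach (fun p q => p ∈ Bw ∧ q ∈ Bw ∧ (incidence S).Adj p q) n
          (Sum.inr (Sum.inr t)) (Sum.inl b) →
        Sum.inr (Sum.inl t) ∈ Bw ∧ ∃ j, Sum.inl (t.2.1 j) ∈ Bw) := by
  intro n
  induction n with
  | zero =>
    intro t
    constructor
    · intro h
      have h' : Sum.inr (Sum.inl t) = Sum.inl b := h
      simp at h'
    · intro h
      have h' : Sum.inr (Sum.inr t) = Sum.inl b := h
      simp at h'
  | succ n ih =>
    intro t
    constructor
    · rintro (h | ⟨z, ⟨hxB, hzB, hadj⟩, hr⟩)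
      · simp at h
      · have hadj' : (∃ t' : Tup S,
            (Sum.inr (Sum.inl t) = Sum.inr (Sum.inl t') ∧ z = Sum.inr (Sum.inr t')) ∨
            (z = Sum.inr (Sum.inl t') ∧ Sum.inr (Sum.inl t) = Sum.inr (Sum.inr t'))) ∨
            (∃ (t' : Tup S) (i : Fin (σ.arity t'.1)),
              (Sum.inr (Sum.inl t) = Sum.inl (t'.2.1 i) ∧ z = Sum.inr (Sum.inl t')) ∨
              (z = Sum.inl (t'.2.1 i) ∧ Sum.inr (Sum.inl t) = Sum.inr (Sum.inl t'))) := hadj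
        rcases hadj' with ⟨t', ⟨heq, rfl⟩ | ⟨rfl, heq⟩⟩ | ⟨t', i, ⟨heq, rfl⟩ | ⟨rfl, heq⟩⟩
        · have ht : t = t' := Sum.inl.inj (Sum.inr.inj heq)
          subst ht
          exact ((ih t).2 hr).2
        · simp at heq
        · simp at heq
        · have ht : t = t' := Sum.inl.inj (Sum.inr.inj heq)
          subst ht
          exact ⟨i, hzB⟩
    · rintro (h | ⟨z, ⟨hxB, hzB, hadj⟩, hr⟩)
      · simp at h
      · have hadj' : (∃ t' : Tup S,
            (Sum.inr (Sum.inr t) = Sum.inr (Sum.inl t') ∧ z = Sum.inr (Sum.inr t')) ∨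
            (z = Sum.inr (Sum.inl t') ∧ Sum.inr (Sum.inr t) = Sum.inr (Sum.inr t'))) ∨
            (∃ (t' : Tup S) (i : Fin (σ.arity t'.1)),
              (Sum.inr (Sum.inr t) = Sum.inl (t'.2.1 i) ∧ z = Sum.inr (Sum.inl t')) ∨
              (z = Sum.inl (t'.2.1 i) ∧ Sum.inr (Sum.inr t) = Sum.inr (Sum.inl t'))) := hadj
        rcases hadj' with ⟨t', ⟨heq, rfl⟩ | ⟨rfl, heq⟩⟩ | ⟨t', i, ⟨heq, rfl⟩ | ⟨rfl, heq⟩⟩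
        · simp at heq
        · have ht : t = t' := Sum.inr.inj (Sum.inr.inj heq)
          subst ht
          exact ⟨hzB, (ih t).1 hr⟩
        · simp at heq
        · simp at heq

/-- A connected branch set with no universe vertices stays within `{v_{R,x̄}, v'_{R,x̄}}`
for a single tuple. -/
lemma only_tup (Bw : Set (S.U ⊕ (Tup S ⊕ Tup S))) (hU : ∀ u : S.U, Sum.inl u ∉ Bw) :
    ∀ (n : ℕ) (t : Tup S) (x y : S.U ⊕ (Tup S ⊕ Tup S)),
      (x = Sum.inr (Sum.inl t) ∨ x = Sum.inr (Sum.inr t)) →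
      boundedReach (fun p q => p ∈ Bw ∧ q ∈ Bw ∧ (incidence S).Adj p q) n x y →
      (y = Sum.inr (Sum.inl t) ∨ y = Sum.inr (Sum.inr t)) := by
  intro n
  induction n with
  | zero =>
    intro t x y hx h
    have h' : x = y := h
    subst h'
    exact hx
  | succ n ih =>
    intro t x y hx h
    rcases h with rfl | ⟨z, ⟨hxB, hzB, hadj⟩, hr⟩
    · exact hx
    · have hadj' : (∃ t' : Tup S,
          (x = Sum.inr (Sum.inl t') ∧ z = Sum.inr (Sum.inr t')) ∨
          (z = Sum.inr (Sum.inl t') ∧ x = Sum.inr (Sum.inr t'))) ∨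
          (∃ (t' : Tup S) (i : Fin (σ.arity t'.1)),
            (x = Sum.inl (t'.2.1 i) ∧ z = Sum.inr (Sum.inl t')) ∨
            (z = Sum.inl (t'.2.1 i) ∧ x = Sum.inr (Sum.inl t'))) := hadj
      rcases hx with rfl | rfl
      · rcases hadj' with ⟨t', ⟨heq, rfl⟩ | ⟨rfl, heq⟩⟩ | ⟨t', i, ⟨heq, rfl⟩ | ⟨rfl, heq⟩⟩
        · have ht : t = t' := Sum.inl.inj (Sum.inr.inj heq)
          subst ht
          exact ih t _ y (Or.inr rfl) hr
        · simp at heq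
        · simp at heq
        · exact absurd hzB (hU _)
      · rcases hadj' with ⟨t', ⟨heq, rfl⟩ | ⟨rfl, heq⟩⟩ | ⟨t', i, ⟨heq, rfl⟩ | ⟨rfl, heq⟩⟩
        · simp at heq
        · have ht : t = t' := Sum.inr.inj (Sum.inr.inj heq)
          subst ht
          exact ih t _ y (Or.inl rfl) hr
        · simp at heq
        · exact absurd hzB (hU _)

end IncAux2

theorem incidence_boundedExpansion (σ : Dict) {ι : Type} (S : ι → Struc σ)
    (hBE : BoundedExpansionFam (fun i => gaifman (S i))) :
    BoundedExpansionFam (fun i => incidence (S i)) := by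
  classical
  obtain ⟨f, hf⟩ := hBE
  haveI := σ.relFin
  set A : ℕ := Finset.univ.sup σ.arity with hA
  refine ⟨fun r => |f (2*r)| + ((A : ℝ) + 2), ?_⟩
  intro i r W H hMin
  haveI : Fintype (S i).U := (S i).uFin
  haveI hTfin : Finite (Tup (S i)) := by unfold Tup; infer_instance
  obtain ⟨B, hdisj, hcen, hadjE⟩ := hMin
  have hSymm : ∀ (w : W) (a b), (a ∈ B w ∧ b ∈ B w ∧ (incidence (S i)).Adj a b) →
      (b ∈ B w ∧ a ∈ B w ∧ (incidence (S i)).Adj b a) :=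
    fun w a b ⟨h1, h2, h3⟩ => ⟨h2, h1, h3.symm⟩
  have hdisj' : ∀ (w1 w2 : W) (v), v ∈ B w1 → v ∈ B w2 → w1 = w2 := by
    intro w1 w2 v h1 h2
    by_contra hne
    exact Set.disjoint_left.mp (hdisj w1 w2 hne) h1 h2
  haveI hWfin : Finite W := by
    have hex : ∀ w : W, ∃ c, c ∈ B w := fun w => (hcen w).imp fun c hc => hc.1
    choose g hg using hex
    exact Finite.of_injective g fun w1 w2 h => hdisj' w1 w2 _ (hg w1) (h ▸ hg w2)
  -- find an element of `t` in a branch set containing `v_{R,x̄}` and a universe vertex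
  have hFindIn : ∀ (w : W) (t : Tup (S i)), (∃ u, Sum.inl u ∈ B w) →
      Sum.inr (Sum.inl t) ∈ B w → ∃ j, Sum.inl (t.2.1 j) ∈ B w := by
    rintro w t ⟨u0, hu0⟩ ht
    obtain ⟨c, hc, hre⟩ := hcen w
    exact (find_elem (B w) u0 (r+r) t).1
      (br_trans (br_symm (hSymm w) (hre _ ht)) (hre _ hu0))
  have hPendIn : ∀ (w : W) (t : Tup (S i)), (∃ u, Sum.inl u ∈ B w) →
      Sum.inr (Sum.inr t) ∈ B w → Sum.inr (Sum.inl t) ∈ B w := by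
    rintro w t ⟨u0, hu0⟩ ht
    obtain ⟨c, hc, hre⟩ := hcen w
    exact ((find_elem (B w) u0 (r+r) t).2
      (br_trans (br_symm (hSymm w) (hre _ ht)) (hre _ hu0))).1
  -- main crossing lemma
  have hmain : ∀ w1 w2, H.Adj w1 w2 → (∃ u, Sum.inl u ∈ B w1) → (∃ u, Sum.inl u ∈ B w2) →
      ∃ u1, Sum.inl u1 ∈ B w1 ∧ ∃ u2, Sum.inl u2 ∈ B w2 ∧ (gaifman (S i)).Adj u1 u2 := by
    intro w1 w2 hadjH hP1 hP2
    obtain ⟨x, hx, y, hy, hadj⟩ := hadjE w1 w2 hadjH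
    have hne : w1 ≠ w2 := hadjH.ne
    have hadj' : (∃ t : Tup (S i), (x = Sum.inr (Sum.inl t) ∧ y = Sum.inr (Sum.inr t)) ∨
        (y = Sum.inr (Sum.inl t) ∧ x = Sum.inr (Sum.inr t))) ∨
        (∃ (t : Tup (S i)) (i0 : Fin (σ.arity t.1)),
          (x = Sum.inl (t.2.1 i0) ∧ y = Sum.inr (Sum.inl t)) ∨
          (y = Sum.inl (t.2.1 i0) ∧ x = Sum.inr (Sum.inl t))) := hadj
    rcases hadj' with ⟨t, ⟨rfl, rfl⟩ | ⟨rfl, rfl⟩⟩ | ⟨t, i0, ⟨rfl, rfl⟩ | ⟨rfl, rfl⟩⟩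
    · exact absurd (hdisj' w2 w1 _ (hPendIn w2 t hP2 hy) hx) hne.symm
    · exact absurd (hdisj' w1 w2 _ (hPendIn w1 t hP1 hx) hy) hne
    · obtain ⟨j, hj⟩ := hFindIn w2 t hP2 hy
      have hneu : t.2.1 i0 ≠ t.2.1 j := fun h => hne (hdisj' w1 w2 _ hx (h ▸ hj))
      exact ⟨_, hx, _, hj, hneu, t.1, t.2.1, t.2.2, ⟨i0, rfl⟩, ⟨j, rfl⟩⟩
    · obtain ⟨j, hj⟩ := hFindIn w1 t hP1 hx
      have hneu : t.2.1 j ≠ t.2.1 i0 := fun h => hne (hdisj' w1 w2 _ hj (h ▸ hy))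
      exact ⟨_, hj, _, hy, hneu, t.1, t.2.1, t.2.2, ⟨j, rfl⟩, ⟨i0, rfl⟩⟩
  -- the Gaifman-side shallow minor
  let H' : SimpleGraph {w : W // ∃ u, Sum.inl u ∈ B w} :=
    { Adj := fun a b => a.1 ≠ b.1 ∧ ∃ u1, Sum.inl u1 ∈ B a.1 ∧
        ∃ u2, Sum.inl u2 ∈ B b.1 ∧ (gaifman (S i)).Adj u1 u2,
      symm := by
        constructor
        rintro a b ⟨hne, u1, h1, u2, h2, hg⟩
        exact ⟨hne.symm, u2, h2, u1, h1, hg.symm⟩,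
      loopless := ⟨fun a h => h.1 rfl⟩ }
  have hMin' : IsShallowMinor (gaifman (S i)) (2*r) H' := by
    refine ⟨fun w => {u | Sum.inl u ∈ B w.1}, ?_, ?_, ?_⟩
    · intro w1 w2 hne
      rw [Set.disjoint_left]
      intro u h1 h2
      exact hne (Subtype.ext (hdisj' w1.1 w2.1 _ h1 h2))
    · rintro ⟨w, u0, hu0⟩
      obtain ⟨c, hc, hre⟩ := hcen w
      refine ⟨u0, hu0, ?_⟩
      intro u hu
      rw [two_mul]
      exact proj_walk (B w) u (r+r) (Sum.inl u0) u0 hu0 (Or.inl rfl)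
        (br_trans (br_symm (hSymm w) (hre _ hu0)) (hre _ hu))
    · rintro w1 w2 ⟨hne, u1, h1, u2, h2, hg⟩
      exact ⟨u1, h1, u2, h2, hg⟩
  have hEbound := hf i (2*r) _ H' hMin'
  -- split H into the part among universe-touching branch sets and the rest
  let H1 : SimpleGraph W :=
    { Adj := fun a b => H.Adj a b ∧ (∃ u, Sum.inl u ∈ B a) ∧ (∃ u, Sum.inl u ∈ B b),
      symm := by constructor; rintro a b ⟨h, h1, h2⟩; exact ⟨h.symm, h2, h1⟩,
      loopless := ⟨fun a h => H.loopless.irrefl a h.1⟩ }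
  let H2 : SimpleGraph W :=
    { Adj := fun a b => H.Adj a b ∧ (¬(∃ u, Sum.inl u ∈ B a) ∨ ¬(∃ u, Sum.inl u ∈ B b)),
      symm := by constructor; rintro a b ⟨h, hc⟩; exact ⟨h.symm, hc.symm⟩,
      loopless := ⟨fun a h => H.loopless.irrefl a h.1⟩ }
  have hsub : H.edgeSet ⊆ H1.edgeSet ∪ H2.edgeSet := by
    intro e
    induction e using Sym2.ind with
    | _ a b =>
      intro he
      rw [SimpleGraph.mem_edgeSet] at he
      by_cases hab : (∃ u, Sum.inl u ∈ B a) ∧ (∃ u, Sum.inl u ∈ B b)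
      · refine Set.mem_union_left _ ?_
        rw [SimpleGraph.mem_edgeSet]
        exact ⟨he, hab.1, hab.2⟩
      · refine Set.mem_union_right _ ?_
        rw [SimpleGraph.mem_edgeSet]
        exact ⟨he, not_and_or.mp hab⟩
  have hcard_split : Nat.card H.edgeSet ≤ Nat.card H1.edgeSet + Nat.card H2.edgeSet := by
    have h1 : Nat.card H.edgeSet ≤ Nat.card ↥(H1.edgeSet ∪ H2.edgeSet) := by
      rw [Nat.card_coe_set_eq, Nat.card_coe_set_eq]
      exact Set.ncard_le_ncard hsub (Set.toFinite _)
    refine h1.trans ?_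
    rw [Nat.card_coe_set_eq, Nat.card_coe_set_eq, Nat.card_coe_set_eq]
    exact Set.ncard_union_le _ _
  -- edges of H1 inject into edges of H'
  have hcard1 : Nat.card H1.edgeSet ≤ Nat.card H'.edgeSet := by
    by_cases hne : Nonempty {w : W // ∃ u, Sum.inl u ∈ B w}
    · set g : W → {w : W // ∃ u, Sum.inl u ∈ B w} :=
        fun w => if h : ∃ u, Sum.inl u ∈ B w then ⟨w, h⟩ else Classical.choice hne with hgdef
      have hgP : ∀ (w : W) (h : ∃ u, Sum.inl u ∈ B w), g w = ⟨w, h⟩ := by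
        intro w h
        simp only [hgdef, dif_pos h]
      have hmem : ∀ e ∈ H1.edgeSet, Sym2.map g e ∈ H'.edgeSet := by
        intro e
        induction e using Sym2.ind with
        | _ a b =>
          intro he
          rw [SimpleGraph.mem_edgeSet] at he
          obtain ⟨hH, ha, hb⟩ := he
          rw [Sym2.map_pair_eq, SimpleGraph.mem_edgeSet, hgP a ha, hgP b hb]
          exact ⟨hH.ne, hmain a b hH ha hb⟩
      have hinj : ∀ e1 ∈ H1.edgeSet, ∀ e2 ∈ H1.edgeSet,
          Sym2.map g e1 = Sym2.map g e2 → e1 = e2 := by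
        intro e1
        induction e1 using Sym2.ind with
        | _ a b =>
          intro he1 e2
          induction e2 using Sym2.ind with
          | _ c d =>
            intro he2 heq
            rw [SimpleGraph.mem_edgeSet] at he1 he2
            obtain ⟨-, ha, hb⟩ := he1
            obtain ⟨-, hc, hd⟩ := he2
            rw [Sym2.map_pair_eq, Sym2.map_pair_eq, hgP a ha, hgP b hb,
              hgP c hc, hgP d hd, Sym2.eq_iff] at heq
            rw [Sym2.eq_iff]
            rcases heq with ⟨h1, h2⟩ | ⟨h1, h2⟩
            · exact Or.inl ⟨congrArg Subtype.val h1, congrArg Subtype.val h2⟩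
            · exact Or.inr ⟨congrArg Subtype.val h1, congrArg Subtype.val h2⟩
      exact Nat.card_le_card_of_injective
        (fun e => (⟨Sym2.map g e.1, hmem e.1 e.2⟩ : ↥H'.edgeSet))
        (fun e1 e2 h => Subtype.ext (hinj e1.1 e1.2 e2.1 e2.2 (congrArg Subtype.val h)))
    · have hempty : H1.edgeSet = ∅ := by
        ext e
        induction e using Sym2.ind with
        | _ a b =>
          simp only [SimpleGraph.mem_edgeSet, Set.mem_empty_iff_false, iff_false]
          rintro ⟨-, ⟨u, hu⟩, -⟩
          exact hne ⟨⟨a, u, hu⟩⟩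
      rw [hempty]
      simp
  -- branch sets avoiding the universe are contained in a single tuple's pair
  have hWT : ∀ w : W, ¬(∃ u, Sum.inl u ∈ B w) →
      ∃ t : Tup (S i), ∀ x ∈ B w,
        x = Sum.inr (Sum.inl t) ∨ x = Sum.inr (Sum.inr t) := by
    intro w hw
    have hU : ∀ u, Sum.inl u ∉ B w := fun u hu => hw ⟨u, hu⟩
    obtain ⟨c, hc, hre⟩ := hcen w
    rcases c with u | t | t
    · exact absurd hc (hU u)
    · exact ⟨t, fun x hx => only_tup (B w) hU r t _ x (Or.inl rfl) (hre x hx)⟩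
    · exact ⟨t, fun x hx => only_tup (B w) hU r t _ x (Or.inr rfl) (hre x hx)⟩
  have htuniq : ∀ (a : W) (t1 t2 : Tup (S i)),
      (∀ x ∈ B a, x = Sum.inr (Sum.inl t1) ∨ x = Sum.inr (Sum.inr t1)) →
      (∀ x ∈ B a, x = Sum.inr (Sum.inl t2) ∨ x = Sum.inr (Sum.inr t2)) → t1 = t2 := by
    intro a t1 t2 h1 h2
    obtain ⟨c, hc, -⟩ := hcen a
    rcases h1 c hc with rfl | rfl <;> rcases h2 _ hc with heq | heq
    · exact Sum.inl.inj (Sum.inr.inj heq)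
    · simp at heq
    · simp at heq
    · exact Sum.inr.inj (Sum.inr.inj heq)
  -- label the edges meeting a non-universe branch set
  let Ψ : Sym2 W → W → Fin (A+2) → Prop := fun e a ℓ =>
    ∃ b : W, e = s(a, b) ∧ ∃ t : Tup (S i),
      (∀ x ∈ B a, x = Sum.inr (Sum.inl t) ∨ x = Sum.inr (Sum.inr t)) ∧
      ((ℓ.val = 0 ∧ Sum.inr (Sum.inl t) ∈ B b) ∨
       (ℓ.val = 1 ∧ Sum.inr (Sum.inr t) ∈ B b) ∨
       (∃ i' : Fin (σ.arity t.1), ℓ.val = i'.val + 2 ∧ Sum.inl (t.2.1 i') ∈ B b))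
  have hΨhalf : ∀ w1 w2, H.Adj w1 w2 → ¬(∃ u, Sum.inl u ∈ B w1) →
      ∃ ℓ, Ψ s(w1, w2) w1 ℓ := by
    intro w1 w2 hadjH hc
    obtain ⟨t0, ht0⟩ := hWT w1 hc
    obtain ⟨x, hx, y, hy, hadj⟩ := hadjE w1 w2 hadjH
    have hadj' : (∃ t : Tup (S i), (x = Sum.inr (Sum.inl t) ∧ y = Sum.inr (Sum.inr t)) ∨
        (y = Sum.inr (Sum.inl t) ∧ x = Sum.inr (Sum.inr t))) ∨
        (∃ (t : Tup (S i)) (i0 : Fin (σ.arity t.1)),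
          (x = Sum.inl (t.2.1 i0) ∧ y = Sum.inr (Sum.inl t)) ∨
          (y = Sum.inl (t.2.1 i0) ∧ x = Sum.inr (Sum.inl t))) := hadj
    have harity : ∀ t : Tup (S i), σ.arity t.1 ≤ A :=
      fun t => Finset.le_sup (f := σ.arity) (Finset.mem_univ t.1)
    rcases ht0 x hx with rfl | rfl
    · rcases hadj' with ⟨t', ⟨heq, rfl⟩ | ⟨rfl, heq⟩⟩ | ⟨t', i', ⟨heq, rfl⟩ | ⟨rfl, heq⟩⟩
      · have ht : t0 = t' := Sum.inl.inj (Sum.inr.inj heq)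
        subst ht
        exact ⟨⟨1, by omega⟩, w2, rfl, t0, ht0, Or.inr (Or.inl ⟨rfl, hy⟩)⟩
      · simp at heq
      · simp at heq
      · have ht : t0 = t' := Sum.inl.inj (Sum.inr.inj heq)
        subst ht
        refine ⟨⟨i'.val + 2, by have := harity t0; omega⟩, w2, rfl, t0, ht0,
          Or.inr (Or.inr ⟨i', rfl, hy⟩)⟩
    · rcases hadj' with ⟨t', ⟨heq, rfl⟩ | ⟨rfl, heq⟩⟩ | ⟨t', i', ⟨heq, rfl⟩ | ⟨rfl, heq⟩⟩
      · simp at heq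
      · have ht : t0 = t' := Sum.inr.inj (Sum.inr.inj heq)
        subst ht
        exact ⟨⟨0, by omega⟩, w2, rfl, t0, ht0, Or.inl ⟨rfl, hy⟩⟩
      · simp at heq
      · simp at heq
  have hΨex : ∀ e ∈ H2.edgeSet, ∃ a ℓ, Ψ e a ℓ := by
    intro e
    induction e using Sym2.ind with
    | _ w1 w2 =>
      intro he
      rw [SimpleGraph.mem_edgeSet] at he
      obtain ⟨hadjH, hc | hc⟩ := he
      · obtain ⟨ℓ, hℓ⟩ := hΨhalf w1 w2 hadjH hc
        exact ⟨w1, ℓ, hℓ⟩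
      · obtain ⟨ℓ, hℓ⟩ := hΨhalf w2 w1 hadjH.symm hc
        refine ⟨w2, ℓ, ?_⟩
        rw [Sym2.eq_swap]
        exact hℓ
  have hΨinj : ∀ e1 e2 a ℓ, Ψ e1 a ℓ → Ψ e2 a ℓ → e1 = e2 := by
    rintro e1 e2 a ℓ ⟨b1, rfl, t1, hs1, hc1⟩ ⟨b2, rfl, t2, hs2, hc2⟩
    have ht : t1 = t2 := htuniq a t1 t2 hs1 hs2
    subst ht
    have hb : b1 = b2 := by
      rcases hc1 with ⟨hv, hm1⟩ | ⟨hv, hm1⟩ | ⟨i1, hv, hm1⟩ <;>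
        rcases hc2 with ⟨hv', hm2⟩ | ⟨hv', hm2⟩ | ⟨i2, hv', hm2⟩
      · exact hdisj' b1 b2 _ hm1 hm2
      · omega
      · omega
      · omega
      · exact hdisj' b1 b2 _ hm1 hm2
      · omega
      · omega
      · omega
      · have hi : i1 = i2 := Fin.ext (by omega)
        subst hi
        exact hdisj' b1 b2 _ hm1 hm2
    rw [hb]
  have hcard2 : Nat.card H2.edgeSet ≤ Nat.card W * (A + 2) := by
    have hF : Function.Injective (fun e : ↥H2.edgeSet =>
        ((hΨex e.1 e.2).choose, (hΨex e.1 e.2).choose_spec.choose)) := by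
      intro e1 e2 hFe
      have h1 := (hΨex e1.1 e1.2).choose_spec.choose_spec
      have h2 := (hΨex e2.1 e2.2).choose_spec.choose_spec
      simp only [Prod.mk.injEq] at hFe
      obtain ⟨ha, hℓ⟩ := hFe
      have h1' : Ψ e1.1 (hΨex e2.1 e2.2).choose (hΨex e2.1 e2.2).choose_spec.choose := by
        rw [← hℓ, ← ha]
        exact h1
      exact Subtype.ext (hΨinj e1.1 e2.1 _ _ h1' h2)
    have := Nat.card_le_card_of_injective _ hF
    rwa [Nat.card_prod, Nat.card_eq_fintype_card (α := Fin (A+2)), Fintype.card_fin] at this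
  -- assemble
  have hWu : Nat.card {w : W // ∃ u, Sum.inl u ∈ B w} ≤ Nat.card W :=
    Nat.card_le_card_of_injective Subtype.val Subtype.val_injective
  have c0 : (Nat.card H.edgeSet : ℝ) ≤
      (Nat.card H1.edgeSet : ℝ) + (Nat.card H2.edgeSet : ℝ) := by
    exact_mod_cast hcard_split
  have c1 : (Nat.card H1.edgeSet : ℝ) ≤
      f (2*r) * (Nat.card {w : W // ∃ u, Sum.inl u ∈ B w} : ℝ) :=
    le_trans (by exact_mod_cast hcard1) hEbound
  have c2 : (Nat.card H2.edgeSet : ℝ) ≤ (Nat.card W : ℝ) * ((A : ℝ) + 2) := by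
    exact_mod_cast hcard2
  have c3 : f (2*r) * (Nat.card {w : W // ∃ u, Sum.inl u ∈ B w} : ℝ) ≤
      |f (2*r)| * (Nat.card W : ℝ) := by
    apply mul_le_mul (le_abs_self _) ?_ (by positivity) (abs_nonneg _)
    exact_mod_cast hWu
  have hgoal : (Nat.card H.edgeSet : ℝ) ≤ (|f (2*r)| + ((A : ℝ) + 2)) * (Nat.card W : ℝ) := by
    nlinarith [c0, c1, c2, c3]
  exact hgoal
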